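/- Variance-peak lower bound for the Marchenko-Pastur integral at ratio α = 1: there is a constant c > 0 such that for all large ξ, ξ² ∫ t (1 + ξ t)^{-2} dμ_1(t) ≥ c · ξ^{1/2}, where μ_1 is the Marchenko-Pastur distribution with ratio parameter 1 (supported on [0,4] with density √((4−t)/t)/(2π)). -/

import Mathlib

open MeasureTheory Real Filter

/-- The Marchenko–Pastur distribution with ratio parameter `α`:
`μ_α = max(0, 1−1/α) δ₀ + (√((α₊−t)(t−α₋))/(2παt)) 1_{[α₋,α₊]}(t) dt`, `α_± = (1±√α)²`. -/
noncomputable def mpMeasure (α : ℝ) : Measure ℝ :=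
  ENNReal.ofReal (max 0 (1 - 1 / α)) • Measure.dirac 0 +
    volume.withDensity fun t => ENNReal.ofReal
      ((Set.Icc ((1 - Real.sqrt α) ^ 2) ((1 + Real.sqrt α) ^ 2)).indicator
        (fun s => Real.sqrt (((1 + Real.sqrt α) ^ 2 - s) * (s - (1 - Real.sqrt α) ^ 2)) /
          (2 * π * α * s)) t)

lemma mp_one : mpMeasure 1 = volume.withDensity fun t => ENNReal.ofReal
    ((Set.Icc (0:ℝ) 4).indicator (fun s => Real.sqrt ((4 - s) * s) / (2 * π * s)) t) := by
  unfold mpMeasure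
  rw [show ENNReal.ofReal (max 0 (1 - 1 / (1:ℝ))) = 0 by norm_num]
  rw [zero_smul, zero_add]
  congr 1
  funext t
  congr 1
  rw [Real.sqrt_one]
  norm_num

/-- Variance-peak lower bound at ratio `α = 1`: there is `c > 0` such that for all large `ξ`,
`ξ² ∫ t (1+ξt)^{-2} dμ₁(t) ≥ c ξ^{1/2}`. -/
theorem mp_variance_peak_lower_bound :
    ∃ c : ℝ, 0 < c ∧ ∀ᶠ ξ in atTop,
      c * Real.sqrt ξ ≤ ξ ^ 2 * ∫ t, t * ((1 + ξ * t) ^ 2)⁻¹ ∂(mpMeasure 1) := by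
  refine ⟨Real.sqrt 2 / (18 * π), by positivity, ?_⟩
  filter_upwards [eventually_ge_atTop (1:ℝ)] with ξ hξ
  have hξ0 : (0:ℝ) < ξ := lt_of_lt_of_le one_pos hξ
  set g : ℝ → ℝ := (Set.Icc (0:ℝ) 4).indicator
    (fun s => Real.sqrt ((4 - s) * s) / (2 * π * s)) with hg
  have hg_meas : Measurable g := by
    apply Measurable.indicator _ measurableSet_Icc
    exact (Real.continuous_sqrt.measurable.comp (by fun_prop)).div (by fun_prop)
  have hg_nonneg : ∀ t, 0 ≤ g t := by
    intro t
    apply Set.indicator_nonneg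
    intro s hs
    apply div_nonneg (Real.sqrt_nonneg _)
    have := hs.1
    positivity
  have hrw : (∫ t, t * ((1 + ξ * t) ^ 2)⁻¹ ∂(mpMeasure 1))
      = ∫ t in Set.Icc (0:ℝ) 4,
        Real.sqrt ((4 - t) * t) / (2 * π * t) * (t * ((1 + ξ * t) ^ 2)⁻¹) := by
    rw [mp_one]
    rw [show (fun t => ENNReal.ofReal (g t)) = (fun t => ((Real.toNNReal (g t) : NNReal) : ENNReal))
      from rfl]
    rw [integral_withDensity_eq_integral_smul (hg_meas.real_toNNReal)
      (fun t => t * ((1 + ξ * t) ^ 2)⁻¹)]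
    rw [← integral_indicator measurableSet_Icc]
    congr 1
    funext t
    rw [NNReal.smul_def, smul_eq_mul, Real.coe_toNNReal _ (hg_nonneg t), hg,
      Set.indicator_mul_left]
  rw [hrw]
  -- integrability on [0,4]
  set F : ℝ → ℝ := fun t => Real.sqrt ((4 - t) * t) / (2 * π * t) * (t * ((1 + ξ * t) ^ 2)⁻¹)
    with hF
  have hF_meas : AEStronglyMeasurable F volume := by
    apply Measurable.aestronglyMeasurable
    exact ((Real.continuous_sqrt.measurable.comp (by fun_prop)).div (by fun_prop)).mul
      (by fun_prop)
  have hF_nonneg : ∀ t ∈ Set.Icc (0:ℝ) 4, 0 ≤ F t := by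
    intro t ht
    have h0 := ht.1
    have h1 : 0 ≤ Real.sqrt ((4 - t) * t) / (2 * π * t) := by
      apply div_nonneg (Real.sqrt_nonneg _); positivity
    have h2 : 0 ≤ t * ((1 + ξ * t) ^ 2)⁻¹ := by positivity
    exact mul_nonneg h1 h2
  have hF_bdd : ∀ t ∈ Set.Icc (0:ℝ) 4, ‖F t‖ ≤ 1 / π := by
    intro t ht
    rw [Real.norm_of_nonneg (hF_nonneg t ht)]
    rcases eq_or_lt_of_le ht.1 with h0 | h0
    · simp [hF, ← h0]
      positivity
    · have hne : t ≠ 0 := ne_of_gt h0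
      have hFe : F t = Real.sqrt ((4 - t) * t) * ((1 + ξ * t) ^ 2)⁻¹ / (2 * π) := by
        rw [hF]
        field_simp
      rw [hFe]
      have hs2 : Real.sqrt ((4 - t) * t) ≤ 2 := by
        rw [show (2:ℝ) = Real.sqrt 4 by rw [show (4:ℝ) = 2^2 by norm_num, Real.sqrt_sq]; norm_num]
        apply Real.sqrt_le_sqrt
        nlinarith [sq_nonneg (t - 2)]
      have hinv1 : ((1 + ξ * t) ^ 2)⁻¹ ≤ 1 := by
        apply inv_le_one_of_one_le₀
        nlinarith [mul_nonneg hξ0.le h0.le]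
      have hinvnn : 0 ≤ ((1 + ξ * t) ^ 2)⁻¹ := by positivity
      calc Real.sqrt ((4 - t) * t) * ((1 + ξ * t) ^ 2)⁻¹ / (2 * π)
          ≤ 2 * 1 / (2 * π) := by gcongr
        _ = 1 / π := by field_simp
  have hF_int : IntegrableOn F (Set.Icc (0:ℝ) 4) volume := by
    apply Measure.integrableOn_of_bounded (M := 1 / π) (by simp) hF_meas
    exact ae_restrict_of_forall_mem measurableSet_Icc hF_bdd
  -- restrict to [1/ξ, 2/ξ]
  have hsub : Set.Icc (1/ξ) (2/ξ) ⊆ Set.Icc (0:ℝ) 4 := by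
    apply Set.Icc_subset_Icc (by positivity)
    rw [div_le_iff₀ hξ0]; nlinarith
  have hmono : ∫ t in Set.Icc (1/ξ) (2/ξ), F t ≤ ∫ t in Set.Icc (0:ℝ) 4, F t := by
    apply setIntegral_mono_set hF_int
    · exact ae_restrict_of_forall_mem measurableSet_Icc hF_nonneg
    · exact HasSubset.Subset.eventuallyLE hsub
  -- pointwise lower bound on [1/ξ, 2/ξ]
  set m : ℝ := Real.sqrt 2 / Real.sqrt ξ / (18 * π) with hm
  have hlow : ∀ t ∈ Set.Icc (1/ξ) (2/ξ), m ≤ F t := by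
    intro t ht
    have ht0 : 0 < t := lt_of_lt_of_le (by positivity) ht.1
    have htξ1 : 1 ≤ t * ξ := (div_le_iff₀ hξ0).mp ht.1
    have htξ2 : t * ξ ≤ 2 := (le_div_iff₀ hξ0).mp ht.2
    have ht2 : t ≤ 2 := by nlinarith
    have hFe : F t = Real.sqrt ((4 - t) * t) * ((1 + ξ * t) ^ 2)⁻¹ / (2 * π) := by
      rw [hF]; field_simp
    rw [hFe]
    have hs1 : Real.sqrt 2 / Real.sqrt ξ ≤ Real.sqrt ((4 - t) * t) := by
      rw [← Real.sqrt_div (by norm_num : (0:ℝ) ≤ 2)]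
      apply Real.sqrt_le_sqrt
      rw [div_le_iff₀ hξ0]
      nlinarith
    have hinv : (9:ℝ)⁻¹ ≤ ((1 + ξ * t) ^ 2)⁻¹ := by
      apply inv_anti₀ (by positivity)
      nlinarith
    have hsnn : 0 ≤ Real.sqrt 2 / Real.sqrt ξ := by positivity
    calc m = (Real.sqrt 2 / Real.sqrt ξ) * (9:ℝ)⁻¹ / (2 * π) := by
            rw [hm]; ring
      _ ≤ Real.sqrt ((4 - t) * t) * ((1 + ξ * t) ^ 2)⁻¹ / (2 * π) := by
            gcongr
  have hvol : (volume (Set.Icc (1/ξ) (2/ξ))).toReal = 1/ξ := by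
    rw [Real.volume_Icc, ENNReal.toReal_ofReal (by rw [sub_nonneg]; gcongr <;> norm_num)]
    ring
  have hkey : m * (1/ξ) ≤ ∫ t in Set.Icc (0:ℝ) 4, F t := by
    calc m * (1/ξ) = m * (volume (Set.Icc (1/ξ) (2/ξ))).toReal := by rw [hvol]
      _ ≤ ∫ t in Set.Icc (1/ξ) (2/ξ), F t :=
          setIntegral_ge_of_const_le_real measurableSet_Icc
            (by simp) hlow (hF_int.mono_set hsub)
      _ ≤ _ := hmono
  have hsq : Real.sqrt ξ * Real.sqrt ξ = ξ := Real.mul_self_sqrt hξ0.le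
  have hsqne : Real.sqrt ξ ≠ 0 := by positivity
  have hfinal : ξ ^ 2 * (m * (1/ξ)) = Real.sqrt 2 / (18 * π) * Real.sqrt ξ := by
    rw [hm]
    field_simp
    linear_combination -hsq
  calc Real.sqrt 2 / (18 * π) * Real.sqrt ξ = ξ ^ 2 * (m * (1/ξ)) := hfinal.symm
    _ ≤ ξ ^ 2 * ∫ t in Set.Icc (0:ℝ) 4, F t := by
        apply mul_le_mul_of_nonneg_left hkey (by positivity)
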